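/- Let p be a prime number and let v ∈ ℤ_p^×. Then v ∈ 1 + pℤ_p if and only if for every positive integer n not divisible by p there exists w ∈ ℤ_p^× with v = w^n. Equivalently, the intersection over all positive integers n coprime to p of the subgroups (ℤ_p^×)^n of ℤ_p^× equals 1 + pℤ_p. -/

import Mathlib

open Polynomial

theorem norm_natCast_one {p : ℕ} [Fact p.Prime] {n : ℕ} (h : ¬ p ∣ n) :
    ‖(n : ℤ_[p])‖ = 1 := by
  have : ((n : ℤ) : ℤ_[p]) = (n : ℤ_[p]) := by push_cast; ring
  rw [← this, PadicInt.norm_intCast_eq_padic_norm]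
  have : ((n : ℤ) : ℚ_[p]) = ((n : ℚ) : ℚ_[p]) := by push_cast; ring
  rw [this, Padic.eq_padicNorm]
  exact_mod_cast (padicNorm.nat_eq_one_iff n).mpr h

/-- A unit `v ∈ ℤ_p^×` lies in the group of principal units `1 + pℤ_p` iff it is an
`n`-th power in `ℤ_p^×` for every positive integer `n` not divisible by `p`. -/
theorem stmt2 (p : ℕ) [Fact p.Prime] (v : ℤ_[p]ˣ) :
    (∃ t : ℤ_[p], (v : ℤ_[p]) = 1 + (p : ℤ_[p]) * t) ↔
      ∀ n : ℕ, 0 < n → ¬ (p ∣ n) → ∃ w : ℤ_[p]ˣ, v = w ^ n := by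
  constructor
  · rintro ⟨t, ht⟩ n hn hpn
    set F : Polynomial ℤ_[p] := X ^ n - C (v : ℤ_[p]) with hF
    have hd : F.derivative.eval 1 = n := by
      simp [hF, Polynomial.derivative_X_pow]
    have hnd : ‖F.derivative.eval 1‖ = 1 := by
      rw [hd]; exact norm_natCast_one hpn
    have hnorm : ‖F.eval 1‖ < ‖F.derivative.eval 1‖ ^ 2 := by
      rw [hnd, one_pow]
      have : F.eval 1 = -((p : ℤ_[p]) * t) := by
        simp [hF, ht]
      rw [this, norm_neg]
      calc ‖(p : ℤ_[p]) * t‖ ≤ ‖(p : ℤ_[p])‖ * ‖t‖ := norm_mul_le _ _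
        _ ≤ ‖(p : ℤ_[p])‖ * 1 := by
            exact mul_le_mul_of_nonneg_left (PadicInt.norm_le_one t) (norm_nonneg _)
        _ < 1 := by
            rw [mul_one, PadicInt.norm_p]
            have hp2 : (2 : ℝ) ≤ p := by exact_mod_cast (Fact.out : p.Prime).two_le
            rw [inv_lt_one_iff₀]; right; linarith
    obtain ⟨z, hz, -, -, -⟩ := hensels_lemma hnorm
    have hzn : z ^ n = (v : ℤ_[p]) := by
      have := hz
      simp [hF, sub_eq_zero] at this
      exact this
    have hu : IsUnit z := by
      have : IsUnit (z ^ n) := hzn ▸ v.isUnit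
      exact (isUnit_pow_iff hn.ne').mp this
    refine ⟨hu.unit, ?_⟩
    ext
    push_cast
    rw [hu.unit_spec, hzn]
  · intro h
    have hp : p.Prime := Fact.out
    have h2 : 2 ≤ p := hp.two_le
    obtain ⟨w, hw⟩ := h (p - 1) (by omega) (fun hd => by
      have := Nat.le_of_dvd (by omega) hd
      omega)
    have hw0 : (PadicInt.toZMod (w : ℤ_[p])) ≠ 0 :=
      (w.isUnit.map PadicInt.toZMod).ne_zero
    have hv1 : PadicInt.toZMod ((v : ℤ_[p]) - 1) = 0 := by
      rw [map_sub, map_one]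
      have : PadicInt.toZMod ((v : ℤ_[p])) = PadicInt.toZMod (w : ℤ_[p]) ^ (p - 1) := by
        rw [hw]; push_cast; rw [map_pow]
      rw [this, ZMod.pow_card_sub_one_eq_one hw0, sub_self]
    have : (v : ℤ_[p]) - 1 ∈ RingHom.ker (PadicInt.toZMod (p := p)) := hv1
    rw [PadicInt.ker_toZMod, PadicInt.maximalIdeal_eq_span_p, Ideal.mem_span_singleton] at this
    obtain ⟨t, ht⟩ := this
    exact ⟨t, by linear_combination ht⟩
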